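/- Let μ ∈ (0,1]. Suppose U : (p₁,p₂] → ℂ satisfies U(p) = (p−p₁)^{μ−1} ũ(p) with ũ continuous on [p₁,p₂], differentiable on (p₁,p₂), ũ' ∈ L¹(p₁,p₂), and ũ(p₁) ≠ 0 if μ ≠ 1. Suppose ψ ∈ C²([p₁,p₂]) is real-valued, ψ' does not vanish and is monotone on [p₁,p₂]. Then for all ω > 0, |∫_{p₁}^{p₂} U(p) e^{iωψ(p)} dp| ≤ C_c(U,ψ) ω^{−μ}, where C_c(U,ψ) = (1/μ)‖ũ‖_{L^∞(p₁,p₂)} + (4‖ũ‖_{L^∞(p₁,p₂)} + ‖ũ'‖_{L¹(p₁,p₂)}) (min_{[p₁,p₂]}|ψ'|)^{−1}. -/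

import Mathlib

open MeasureTheory intervalIntegral

lemma aux_deriv_nonneg {f : ℝ → ℝ} {a b x d : ℝ} (hm : MonotoneOn f (Set.Icc a b))
    (hx : x ∈ Set.Ioo a b) (hd : HasDerivAt f d x) : 0 ≤ d := by
  have h := (hasDerivWithinAt_iff_tendsto_slope' (s := Set.Ioi x)
    (Set.notMem_Ioi.2 le_rfl)).1 (hd.hasDerivWithinAt (s := Set.Ioi x))
  refine ge_of_tendsto h ?_
  filter_upwards [Ioo_mem_nhdsGT hx.2] with y hy
  have hxy : x < y := hy.1
  have : f x ≤ f y := hm ⟨le_of_lt hx.1, le_of_lt hx.2⟩ ⟨le_of_lt (hx.1.trans hxy), hy.2.le⟩ hxy.le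
  rw [slope_def_field]
  exact div_nonneg (by linarith) (by linarith)

lemma aux_deriv_nonpos {f : ℝ → ℝ} {a b x d : ℝ} (hm : AntitoneOn f (Set.Icc a b))
    (hx : x ∈ Set.Ioo a b) (hd : HasDerivAt f d x) : d ≤ 0 := by
  have := aux_deriv_nonneg (f := fun y => -f y) (hm.neg) hx hd.neg
  linarith

/-- Non-stationary phase estimate with singular amplitude. -/
theorem stmt_10 (μ p₁ p₂ : ℝ) (hμ : μ ∈ Set.Ioc (0:ℝ) 1) (hp : p₁ < p₂)
    (ψ : ℝ → ℝ) (hψ : ContDiffOn ℝ 2 ψ (Set.Icc p₁ p₂))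
    (hψ'0 : ∀ p ∈ Set.Icc p₁ p₂, deriv ψ p ≠ 0)
    (hmono : MonotoneOn (deriv ψ) (Set.Icc p₁ p₂) ∨
      AntitoneOn (deriv ψ) (Set.Icc p₁ p₂))
    (U ut : ℝ → ℂ)
    (hU : ∀ p ∈ Set.Ioc p₁ p₂, U p = ((p - p₁) ^ (μ - 1) : ℝ) * ut p)
    (hutc : ContinuousOn ut (Set.Icc p₁ p₂))
    (hutd : ∀ p ∈ Set.Ioo p₁ p₂, DifferentiableAt ℝ ut p)
    (hutint : IntervalIntegrable (deriv ut) volume p₁ p₂)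
    (hut0 : μ ≠ 1 → ut p₁ ≠ 0) :
    ∀ ω : ℝ, 0 < ω →
      ‖∫ p in p₁..p₂, U p * Complex.exp (Complex.I * ω * ψ p)‖ ≤
        ((1 / μ) * (⨆ p : Set.Icc p₁ p₂, ‖ut p‖) +
          (4 * (⨆ p : Set.Icc p₁ p₂, ‖ut p‖) + ∫ p in p₁..p₂, ‖deriv ut p‖) *
          (⨅ p : Set.Icc p₁ p₂, |deriv ψ p|)⁻¹) * ω ^ (-μ) := by
  intro ω hω
  obtain ⟨hμ0, hμ1⟩ := hμ
  set M : ℝ := ⨆ p : Set.Icc p₁ p₂, ‖ut p‖ with hMdef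
  set m : ℝ := ⨅ p : Set.Icc p₁ p₂, |deriv ψ p| with hmdef
  set L : ℝ := ∫ p in p₁..p₂, ‖deriv ut p‖ with hLdef
  have hne : (Set.Icc p₁ p₂).Nonempty := Set.nonempty_Icc.2 hp.le
  haveI : Nonempty (Set.Icc p₁ p₂) := hne.to_subtype
  have hud : UniqueDiffOn ℝ (Set.Icc p₁ p₂) := uniqueDiffOn_Icc hp
  -- differentiability of ψ on Icc
  have hψdiff : ∀ p ∈ Set.Icc p₁ p₂, DifferentiableAt ℝ ψ p := by
    intro p hp'
    by_contra h
    exact hψ'0 p hp' (deriv_zero_of_not_differentiableAt h)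
  -- deriv ψ agrees with derivWithin on Icc
  have hderiv_eq : ∀ p ∈ Set.Icc p₁ p₂, deriv ψ p = derivWithin ψ (Set.Icc p₁ p₂) p := by
    intro p hp'
    exact ((hψdiff p hp').derivWithin (hud p hp')).symm
  -- continuity of deriv ψ on Icc
  have hψ'c : ContinuousOn (deriv ψ) (Set.Icc p₁ p₂) := by
    have := hψ.continuousOn_derivWithin hud one_le_two
    exact this.congr hderiv_eq
  -- differentiability of deriv ψ at interior points, with bounded second derivative
  have hD1 : ContDiffOn ℝ 1 (derivWithin ψ (Set.Icc p₁ p₂)) (Set.Icc p₁ p₂) :=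
    hψ.derivWithin hud (by norm_num)
  have hev : ∀ p ∈ Set.Ioo p₁ p₂,
      deriv ψ =ᶠ[nhds p] derivWithin ψ (Set.Icc p₁ p₂) := by
    intro p hp'
    exact Filter.eventuallyEq_of_mem (Icc_mem_nhds hp'.1 hp'.2) hderiv_eq
  have hDdiff : ∀ p ∈ Set.Ioo p₁ p₂,
      DifferentiableAt ℝ (derivWithin ψ (Set.Icc p₁ p₂)) p := by
    intro p hp'
    exact ((hD1.differentiableOn one_ne_zero) p (Set.Ioo_subset_Icc_self hp')).differentiableAt
      (Icc_mem_nhds hp'.1 hp'.2)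
  have hψ'diff : ∀ p ∈ Set.Ioo p₁ p₂, DifferentiableAt ℝ (deriv ψ) p := by
    intro p hp'
    exact ((hev p hp').differentiableAt_iff).2 (hDdiff p hp')
  have hK : ∃ K : ℝ, ∀ p ∈ Set.Ioo p₁ p₂, |deriv (deriv ψ) p| ≤ K := by
    have hD2c : ContinuousOn
        (derivWithin (derivWithin ψ (Set.Icc p₁ p₂)) (Set.Icc p₁ p₂)) (Set.Icc p₁ p₂) :=
      hD1.continuousOn_derivWithin hud le_rfl
    obtain ⟨K, hKb⟩ := isCompact_Icc.exists_bound_of_continuousOn hD2c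
    refine ⟨K, fun p hp' => ?_⟩
    have h1 : deriv (deriv ψ) p = deriv (derivWithin ψ (Set.Icc p₁ p₂)) p :=
      (hev p hp').deriv_eq
    have h2 : deriv (derivWithin ψ (Set.Icc p₁ p₂)) p
        = derivWithin (derivWithin ψ (Set.Icc p₁ p₂)) (Set.Icc p₁ p₂) p :=
      ((hDdiff p hp').derivWithin (hud p (Set.Ioo_subset_Icc_self hp'))).symm
    rw [h1, h2, ← Real.norm_eq_abs]
    exact hKb p (Set.Ioo_subset_Icc_self hp')
  -- basic bounds
  have hbdd : BddAbove (Set.range fun p : Set.Icc p₁ p₂ => ‖ut ↑p‖) := by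
    have := (isCompact_Icc.image_of_continuousOn hutc.norm).bddAbove
    rwa [Set.image_eq_range] at this
  have hMle : ∀ p ∈ Set.Icc p₁ p₂, ‖ut p‖ ≤ M :=
    fun p hp' => le_ciSup hbdd ⟨p, hp'⟩
  have hM0 : 0 ≤ M := le_trans (norm_nonneg _) (hMle p₁ ⟨le_refl _, hp.le⟩)
  have hmle : ∀ p ∈ Set.Icc p₁ p₂, m ≤ |deriv ψ p| := by
    intro p hp'
    have hbddb : BddBelow (Set.range fun p : Set.Icc p₁ p₂ => |deriv ψ ↑p|) :=
      ⟨0, by rintro x ⟨q, rfl⟩; exact abs_nonneg _⟩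
    exact ciInf_le hbddb ⟨p, hp'⟩
  have hmpos : 0 < m := by
    obtain ⟨x₀, hx₀, hmin⟩ := isCompact_Icc.exists_isMinOn hne (hψ'c.abs)
    have : |deriv ψ x₀| ≤ m := le_ciInf fun q => hmin q.2
    have h0 : 0 < |deriv ψ x₀| := abs_pos.2 (hψ'0 x₀ hx₀)
    linarith
  have hL0 : 0 ≤ L := intervalIntegral.integral_nonneg hp.le (fun x _ => norm_nonneg _)
  -- constant sign of deriv ψ
  have hsign : (∀ p ∈ Set.Icc p₁ p₂, 0 < deriv ψ p) ∨
      (∀ p ∈ Set.Icc p₁ p₂, deriv ψ p < 0) := by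
    by_contra h
    push_neg at h
    obtain ⟨⟨x, hx, hx0⟩, ⟨y, hy, hy0⟩⟩ := h
    have hsub : Set.uIcc x y ⊆ Set.Icc p₁ p₂ := Set.uIcc_subset_Icc hx hy
    have h0 : (0:ℝ) ∈ Set.uIcc (deriv ψ x) (deriv ψ y) :=
      Set.mem_uIcc.2 (Or.inl ⟨hx0, hy0⟩)
    obtain ⟨z, hz, hz0⟩ := intermediate_value_uIcc (hψ'c.mono hsub) h0
    exact hψ'0 z (hsub hz) hz0
  -- monotonicity of the reciprocal of deriv ψ
  have hwm : MonotoneOn (fun p => (deriv ψ p)⁻¹) (Set.Icc p₁ p₂) ∨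
      AntitoneOn (fun p => (deriv ψ p)⁻¹) (Set.Icc p₁ p₂) := by
    have key : ∀ x ∈ Set.Icc p₁ p₂, ∀ y ∈ Set.Icc p₁ p₂,
        deriv ψ x ≤ deriv ψ y → (deriv ψ y)⁻¹ ≤ (deriv ψ x)⁻¹ := by
      intro x hx y hy hxy
      rcases hsign with hs | hs
      · exact inv_anti₀ (hs x hx) hxy
      · exact (inv_le_inv_of_neg (hs y hy) (hs x hx)).2 hxy
    rcases hmono with hm | hm
    · exact Or.inr (fun x hx y hy hxy => key x hx y hy (hm hx hy hxy))
    · exact Or.inl (fun x hx y hy hxy => key y hy x hx (hm hx hy hxy))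
  -- main objects
  set v : ℝ → ℝ := fun p => (p - p₁) ^ (μ - 1) with hvdef
  set G : ℝ → ℂ := fun p => Complex.exp (Complex.I * ω * ψ p) with hGdef
  set f : ℝ → ℂ := fun p => (v p : ℂ) * ut p * G p with hfdef
  have hGnorm : ∀ p, ‖G p‖ = 1 := by
    intro p
    rw [hGdef]
    simp [Complex.norm_exp]
  have hGcont : ContinuousOn G (Set.Icc p₁ p₂) := by
    apply Complex.continuous_exp.comp_continuousOn
    exact continuousOn_const.mul (Complex.continuous_ofReal.comp_continuousOn hψ.continuousOn)
  have hvpos : ∀ p, p₁ < p → 0 < v p := by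
    intro p hp'
    exact Real.rpow_pos_of_pos (by linarith) _
  have hvcont : ContinuousOn v (Set.Ioi p₁) := by
    apply ContinuousOn.rpow_const (by fun_prop)
    intro x hx
    exact Or.inl (ne_of_gt (sub_pos.2 hx))
  have hmain : (∫ p in p₁..p₂, U p * Complex.exp (Complex.I * ω * ψ p))
      = ∫ p in p₁..p₂, f p := by
    apply intervalIntegral.integral_congr_ae
    apply Filter.Eventually.of_forall
    intro x hx
    rw [Set.uIoc_of_le hp.le] at hx
    rw [hU x hx, hfdef]
  -- the bound function for the singular part
  have hgint : ∀ x, IntervalIntegrable (fun p => M * v p) volume p₁ x := by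
    intro x
    apply IntervalIntegrable.const_mul
    have h0 := (intervalIntegrable_rpow' (a := 0) (b := x - p₁) (r := μ - 1)
      (by linarith)).comp_sub_right p₁
    simpa using h0
  have hgval : ∀ x, (∫ p in p₁..x, M * v p) = M * ((x - p₁) ^ μ / μ) := by
    intro x
    rw [intervalIntegral.integral_const_mul]
    congr 1
    have h1 := intervalIntegral.integral_comp_sub_right (a := p₁) (b := x)
      (fun u => u ^ (μ - 1)) p₁
    simp only [hvdef]
    rw [h1, sub_self, integral_rpow (Or.inl (by linarith : (-1:ℝ) < μ - 1)), sub_add_cancel,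
      Real.zero_rpow (ne_of_gt hμ0), sub_zero]
  have hfcont : ContinuousOn f (Set.Icc p₁ p₂ ∩ Set.Ioi p₁) := by
    apply ContinuousOn.mul _ (hGcont.mono Set.inter_subset_left)
    exact (Complex.continuous_ofReal.comp_continuousOn
      (hvcont.mono Set.inter_subset_right)).mul (hutc.mono Set.inter_subset_left)
  have hnormf : ∀ p ∈ Set.Ioc p₁ p₂, ‖f p‖ ≤ M * v p := by
    intro p hp'
    have h1 : ‖f p‖ = v p * ‖ut p‖ := by
      rw [hfdef]
      rw [norm_mul, norm_mul, hGnorm, Complex.norm_real, Real.norm_eq_abs,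
        abs_of_pos (hvpos p hp'.1), mul_one]
    rw [h1, mul_comm M (v p)]
    exact mul_le_mul_of_nonneg_left (hMle p ⟨hp'.1.le, hp'.2⟩) (hvpos p hp'.1).le
  have hIocsub : ∀ x ∈ Set.Ioc p₁ p₂, Set.Ioc p₁ x ⊆ Set.Icc p₁ p₂ ∩ Set.Ioi p₁ := by
    intro x hx p hp'
    exact ⟨⟨hp'.1.le, hp'.2.trans hx.2⟩, hp'.1⟩
  have hfint1 : ∀ x ∈ Set.Ioc p₁ p₂, IntervalIntegrable f volume p₁ x := by
    intro x hx
    rw [intervalIntegrable_iff_integrableOn_Ioc_of_le hx.1.le]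
    have hmeas : AEStronglyMeasurable f (volume.restrict (Set.Ioc p₁ x)) :=
      (hfcont.mono (hIocsub x hx)).aestronglyMeasurable measurableSet_Ioc
    apply Integrable.mono' ((hgint x).1) hmeas
    rw [ae_restrict_iff' measurableSet_Ioc]
    apply Filter.Eventually.of_forall
    intro p hp'
    exact hnormf p ⟨hp'.1, hp'.2.trans hx.2⟩
  have hbound1 : ∀ x ∈ Set.Ioc p₁ p₂, ‖∫ p in p₁..x, f p‖ ≤ M * ((x - p₁) ^ μ / μ) := by
    intro x hx
    have hae : ∀ᵐ t ∂(volume.restrict (Set.uIoc p₁ x)), ‖f t‖ ≤ M * v t := by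
      rw [Set.uIoc_of_le hx.1.le, ae_restrict_iff' measurableSet_Ioc]
      apply Filter.Eventually.of_forall
      intro p hp'
      exact hnormf p ⟨hp'.1, hp'.2.trans hx.2⟩
    have h2 := intervalIntegral.norm_integral_le_abs_of_norm_le hae (hgint x)
    rw [hgval x] at h2
    refine h2.trans (le_of_eq (abs_of_nonneg ?_))
    have : (0:ℝ) ≤ (x - p₁) ^ μ := Real.rpow_nonneg (by linarith [hx.1]) _
    positivity
  -- reciprocal of deriv ψ
  set w : ℝ → ℝ := fun p => (deriv ψ p)⁻¹ with hwdef
  have hwcont : ContinuousOn w (Set.Icc p₁ p₂) := hψ'c.inv₀ hψ'0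
  have hwbound : ∀ p ∈ Set.Icc p₁ p₂, |w p| ≤ m⁻¹ := by
    intro p hp'
    rw [hwdef]
    rw [abs_inv]
    exact inv_anti₀ hmpos (hmle p hp')
  have hwd : ∀ p ∈ Set.Ioo p₁ p₂, HasDerivAt w (deriv w p) p := by
    intro p hp'
    exact ((hψ'diff p hp').inv (hψ'0 p (Set.Ioo_subset_Icc_self hp'))).hasDerivAt
  have hK' : ∃ K' : ℝ, ∀ p ∈ Set.Ioo p₁ p₂, |deriv w p| ≤ K' := by
    obtain ⟨K, hKb⟩ := hK
    refine ⟨K * (m ^ 2)⁻¹, fun p hp' => ?_⟩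
    have hmem := Set.Ioo_subset_Icc_self hp'
    have hd : deriv w p = -deriv (deriv ψ) p / (deriv ψ p) ^ 2 := by
      rw [hwdef]
      exact deriv_inv'' (hψ'diff p hp') (hψ'0 p hmem)
    rw [hd, abs_div, abs_neg, abs_of_nonneg (sq_nonneg (deriv ψ p))]
    have h1 : m ^ 2 ≤ (deriv ψ p) ^ 2 := by
      have := hmle p hmem
      nlinarith [abs_nonneg (deriv ψ p), sq_abs (deriv ψ p), hmpos]
    have h2 : (0:ℝ) < m ^ 2 := by positivity
    rw [div_eq_mul_inv]
    exact mul_le_mul (hKb p hp') (inv_anti₀ h2 h1) (by positivity) ((abs_nonneg _).trans (hKb p hp'))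
  have hvd' : ∀ x, p₁ < x → HasDerivAt v ((μ - 1) * (x - p₁) ^ (μ - 2)) x := by
    intro x hx
    have h1 : HasDerivAt (fun p : ℝ => p - p₁) 1 x := (hasDerivAt_id x).sub_const p₁
    have h2 := Real.hasDerivAt_rpow_const (x := x - p₁) (p := μ - 1)
      (Or.inl (ne_of_gt (sub_pos.2 hx)))
    have h3 := h2.comp x h1
    simpa [Function.comp_def, hvdef, show μ - 1 - 1 = μ - 2 by ring] using h3
  have hane : ∀ᵐ (x : ℝ) ∂volume, x ≠ p₂ := by
    rw [Filter.eventually_iff, mem_ae_iff]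
    convert measure_singleton p₂ using 2
    · ext x; simp
    · infer_instance
  have hiω : ‖(Complex.I * ω : ℂ)‖ = ω := by
    rw [norm_mul, Complex.norm_I, one_mul, Complex.norm_real, Real.norm_eq_abs, abs_of_pos hω]
  have hiω0 : (Complex.I * ω : ℂ) ≠ 0 :=
    mul_ne_zero Complex.I_ne_zero (by exact_mod_cast ne_of_gt hω)
  -- integration by parts estimate on [c, p₂]
  have key2 : ∀ c ∈ Set.Ioo p₁ p₂, IntervalIntegrable f volume c p₂ ∧
      ‖∫ p in c..p₂, f p‖ ≤ (4 * M + L) * v c * m⁻¹ / ω := by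
    intro c hc
    have hcp : c ≤ p₂ := hc.2.le
    have hJ : Set.Icc c p₂ ⊆ Set.Icc p₁ p₂ := Set.Icc_subset_Icc hc.1.le le_rfl
    have hJ2 : Set.Icc c p₂ ⊆ Set.Icc p₁ p₂ ∩ Set.Ioi p₁ :=
      fun x hx => ⟨hJ hx, hc.1.trans_le hx.1⟩
    have hJoo : Set.Ioo c p₂ ⊆ Set.Ioo p₁ p₂ := Set.Ioo_subset_Ioo hc.1.le le_rfl
    have huIcc : Set.uIcc c p₂ = Set.Icc c p₂ := Set.uIcc_of_le hcp
    have huIoc : Set.uIoc c p₂ = Set.Ioc c p₂ := Set.uIoc_of_le hcp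
    have hsubI : Set.uIcc c p₂ ⊆ Set.uIcc p₁ p₂ := by
      rw [huIcc, Set.uIcc_of_le hp.le]; exact hJ
    have hvcJ : ContinuousOn v (Set.Icc c p₂) :=
      hvcont.mono (fun x hx => hc.1.trans_le hx.1)
    have hvle : ∀ p ∈ Set.Icc c p₂, v p ≤ v c := by
      intro p hp'
      exact Real.rpow_le_rpow_of_nonpos (by linarith [hc.1]) (by linarith [hp'.1]) (by linarith)
    have hvc0 : 0 < v c := hvpos c hc.1
    have hfint2 : IntervalIntegrable f volume c p₂ := by
      apply ContinuousOn.intervalIntegrable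
      rw [huIcc]
      exact hfcont.mono hJ2
    refine ⟨hfint2, ?_⟩
    have hv2cont : ContinuousOn (fun p : ℝ => (p - p₁) ^ (μ - 2)) (Set.Icc c p₂) := by
      apply ContinuousOn.rpow_const (by fun_prop)
      intro x hx; exact Or.inl (ne_of_gt (sub_pos.2 (hc.1.trans_le hx.1)))
    -- interval integrability of deriv w
    have hwint : IntervalIntegrable (deriv w) volume c p₂ := by
      obtain ⟨K', hK'b⟩ := hK'
      rw [intervalIntegrable_iff_integrableOn_Ioc_of_le hcp]
      have hmeas : AEStronglyMeasurable (deriv w) (volume.restrict (Set.Ioc c p₂)) :=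
        (measurable_deriv w).aestronglyMeasurable
      apply Integrable.mono' (g := fun _ => K')
        (integrableOn_const measure_Ioc_lt_top.ne enorm_ne_top) hmeas
      filter_upwards [ae_restrict_mem measurableSet_Ioc, ae_restrict_of_ae hane]
        with x hx hxne
      rw [Real.norm_eq_abs]
      exact hK'b x (hJoo ⟨hx.1, lt_of_le_of_ne hx.2 hxne⟩)
    have hderivw_int : IntervalIntegrable (fun p => ((deriv w p : ℝ) : ℂ)) volume c p₂ := by
      rw [intervalIntegrable_iff] at hwint ⊢
      exact hwint.ofReal
    -- bound on the total variation of w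
    have hintabsw : (∫ p in c..p₂, |deriv w p|) ≤ m⁻¹ := by
      have hftcw : (∫ p in c..p₂, deriv w p) = w p₂ - w c :=
        intervalIntegral.integral_eq_sub_of_hasDeriv_right_of_le hcp (hwcont.mono hJ)
          (fun x hx => (hwd x (hJoo hx)).hasDerivWithinAt) hwint
      have hdiffb : |w p₂ - w c| ≤ m⁻¹ := by
        have hb2 := hwbound p₂ ⟨hp.le, le_rfl⟩
        have hbc := hwbound c (hJ ⟨le_rfl, hcp⟩)
        rcases hsign with hs | hs
        · have h1 : 0 < w p₂ := inv_pos.2 (hs p₂ ⟨hp.le, le_rfl⟩)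
          have h2 : 0 < w c := inv_pos.2 (hs c (hJ ⟨le_rfl, hcp⟩))
          rw [abs_of_pos h1] at hb2
          rw [abs_of_pos h2] at hbc
          rw [abs_sub_le_iff]
          constructor <;> linarith
        · have h1 : w p₂ < 0 := inv_neg''.2 (hs p₂ ⟨hp.le, le_rfl⟩)
          have h2 : w c < 0 := inv_neg''.2 (hs c (hJ ⟨le_rfl, hcp⟩))
          rw [abs_of_neg h1] at hb2
          rw [abs_of_neg h2] at hbc
          rw [abs_sub_le_iff]
          constructor <;> linarith
      rcases hwm with hm | hm
      · have h0 : ∀ x ∈ Set.Ioo c p₂, 0 ≤ deriv w x :=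
          fun x hx => aux_deriv_nonneg (hm.mono hJ) hx (hwd x (hJoo hx))
        have hcongr : (∫ p in c..p₂, |deriv w p|) = ∫ p in c..p₂, deriv w p := by
          apply intervalIntegral.integral_congr_ae
          filter_upwards [hane] with x hxne hx
          rw [huIoc] at hx
          exact abs_of_nonneg (h0 x ⟨hx.1, lt_of_le_of_ne hx.2 hxne⟩)
        rw [hcongr, hftcw]
        exact (le_abs_self _).trans hdiffb
      · have h0 : ∀ x ∈ Set.Ioo c p₂, deriv w x ≤ 0 :=
          fun x hx => aux_deriv_nonpos (hm.mono hJ) hx (hwd x (hJoo hx))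
        have hcongr : (∫ p in c..p₂, |deriv w p|) = ∫ p in c..p₂, -deriv w p := by
          apply intervalIntegral.integral_congr_ae
          filter_upwards [hane] with x hxne hx
          rw [huIoc] at hx
          exact abs_of_nonpos (h0 x ⟨hx.1, lt_of_le_of_ne hx.2 hxne⟩)
        rw [hcongr, intervalIntegral.integral_neg, hftcw]
        have : |-(w p₂ - w c)| ≤ m⁻¹ := by rwa [abs_neg]
        exact (le_abs_self _).trans this
    -- the integrand pieces
    set F : ℝ → ℂ := fun p => ((v p * w p : ℝ) : ℂ) * ut p / (Complex.I * ω) with hFdef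
    set F' : ℝ → ℂ := fun p =>
      ((((μ - 1) * (p - p₁) ^ (μ - 2) * w p + v p * deriv w p : ℝ) : ℂ) * ut p
        + ((v p * w p : ℝ) : ℂ) * deriv ut p) / (Complex.I * ω) with hF'def
    set T₁ : ℝ → ℂ := fun p =>
      (((μ - 1) * (p - p₁) ^ (μ - 2) * w p : ℝ) : ℂ) * (ut p * G p) / (Complex.I * ω)
      with hT1def
    set T₂ : ℝ → ℂ := fun p =>
      ((deriv w p : ℝ) : ℂ) * (((v p : ℝ) : ℂ) * ut p * G p / (Complex.I * ω)) with hT2def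
    set T₃ : ℝ → ℂ := fun p =>
      deriv ut p * (((v p * w p : ℝ) : ℂ) * G p / (Complex.I * ω)) with hT3def
    have hFderiv : ∀ p ∈ Set.Ioo c p₂, HasDerivAt F (F' p) p := by
      intro p hp'
      have hp2 := hJoo hp'
      have h1 : HasDerivAt (fun q => v q * w q)
          ((μ - 1) * (p - p₁) ^ (μ - 2) * w p + v p * deriv w p) p :=
        (hvd' p hp2.1).mul (hwd p hp2)
      have h3 := (h1.ofReal_comp.mul ((hutd p hp2).hasDerivAt)).div_const (Complex.I * ω)
      exact h3
    have hGderiv : ∀ p ∈ Set.Icc p₁ p₂,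
        HasDerivAt G (G p * (Complex.I * ω * deriv ψ p)) p := by
      intro p hp'
      have h1 : HasDerivAt (fun q : ℝ => ((ψ q : ℂ))) ((deriv ψ p : ℝ) : ℂ) p :=
        ((hψdiff p hp').hasDerivAt).ofReal_comp
      exact (h1.const_mul (Complex.I * ω)).cexp
    have hFcont : ContinuousOn F (Set.Icc c p₂) := by
      apply ContinuousOn.div_const
      exact (Complex.continuous_ofReal.comp_continuousOn
        (hvcJ.mul (hwcont.mono hJ))).mul (hutc.mono hJ)
    have hPcont : ContinuousOn (fun p => F p * G p) (Set.Icc c p₂) :=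
      hFcont.mul (hGcont.mono hJ)
    have hPQ : ∀ p ∈ Set.Ioo c p₂, HasDerivAt (fun q => F q * G q)
        (F' p * G p + F p * (G p * (Complex.I * ω * deriv ψ p))) p :=
      fun p hp' => (hFderiv p hp').mul (hGderiv p (hJ (Set.Ioo_subset_Icc_self hp')))
    have hT1int : IntervalIntegrable T₁ volume c p₂ := by
      apply ContinuousOn.intervalIntegrable
      rw [huIcc, hT1def]
      apply ContinuousOn.div_const
      refine (Complex.continuous_ofReal.comp_continuousOn ?_).mul
        ((hutc.mono hJ).mul (hGcont.mono hJ))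
      exact (continuousOn_const.mul hv2cont).mul (hwcont.mono hJ)
    have hrest2 : ContinuousOn (fun p => ((v p : ℝ) : ℂ) * ut p * G p / (Complex.I * ω))
        (Set.Icc c p₂) := by
      apply ContinuousOn.div_const
      exact ((Complex.continuous_ofReal.comp_continuousOn hvcJ).mul (hutc.mono hJ)).mul
        (hGcont.mono hJ)
    have hT2int : IntervalIntegrable T₂ volume c p₂ := by
      apply hderivw_int.mul_continuousOn
      rw [huIcc]
      exact hrest2
    have hrest3 : ContinuousOn (fun p => ((v p * w p : ℝ) : ℂ) * G p / (Complex.I * ω))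
        (Set.Icc c p₂) := by
      apply ContinuousOn.div_const
      exact (Complex.continuous_ofReal.comp_continuousOn
        (hvcJ.mul (hwcont.mono hJ))).mul (hGcont.mono hJ)
    have hT3int : IntervalIntegrable T₃ volume c p₂ := by
      apply (hutint.mono_set hsubI).mul_continuousOn
      rw [huIcc]
      exact hrest3
    have hsplitfun : (fun p => F' p * G p) = fun p => T₁ p + T₂ p + T₃ p := by
      funext p
      rw [hF'def, hT1def, hT2def, hT3def]
      push_cast
      ring
    have hF'Gint : IntervalIntegrable (fun p => F' p * G p) volume c p₂ := by
      rw [hsplitfun]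
      exact (hT1int.add hT2int).add hT3int
    have hQint : IntervalIntegrable
        (fun p => F' p * G p + F p * (G p * (Complex.I * ω * deriv ψ p))) volume c p₂ := by
      apply hF'Gint.add
      apply ContinuousOn.intervalIntegrable
      rw [huIcc]
      exact hFcont.mul ((hGcont.mono hJ).mul (continuousOn_const.mul
        (Complex.continuous_ofReal.comp_continuousOn (hψ'c.mono hJ))))
    have hftc : (∫ p in c..p₂, (F' p * G p + F p * (G p * (Complex.I * ω * deriv ψ p))))
        = F p₂ * G p₂ - F c * G c :=
      intervalIntegral.integral_eq_sub_of_hasDeriv_right_of_le hcp hPcont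
        (fun p hp' => (hPQ p hp').hasDerivWithinAt) hQint
    have hQf : ∀ p ∈ Set.Icc c p₂,
        F p * (G p * (Complex.I * ω * deriv ψ p)) = f p := by
      intro p hp'
      have hw1 : ((w p : ℝ) : ℂ) * ((deriv ψ p : ℝ) : ℂ) = 1 := by
        rw [hwdef, ← Complex.ofReal_mul, inv_mul_cancel₀ (hψ'0 p (hJ hp')),
          Complex.ofReal_one]
      have hcast : ((v p * w p : ℝ) : ℂ) = (v p : ℂ) * (w p : ℂ) := by push_cast; ring
      simp only [hFdef, hfdef, hcast]
      rw [div_mul_eq_mul_div, div_eq_iff hiω0]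
      linear_combination ((v p : ℂ) * ut p * G p * Complex.I * (ω : ℂ)) * hw1
    have hsplit2 : (∫ p in c..p₂, f p)
        = (F p₂ * G p₂ - F c * G c) - ∫ p in c..p₂, F' p * G p := by
      have h1 : (∫ p in c..p₂, (F' p * G p + F p * (G p * (Complex.I * ω * deriv ψ p))))
          = (∫ p in c..p₂, F' p * G p) + ∫ p in c..p₂, f p := by
        rw [← intervalIntegral.integral_add hF'Gint hfint2]
        apply intervalIntegral.integral_congr
        intro p hp'
        rw [huIcc] at hp'
        show F' p * G p + F p * (G p * (Complex.I * ω * deriv ψ p)) = F' p * G p + f p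
        rw [hQf p hp']
      linear_combination hftc - h1
    -- norm bounds
    have hc0 : 0 ≤ M * m⁻¹ / ω := div_nonneg (mul_nonneg hM0 (inv_nonneg.2 hmpos.le)) hω.le
    have hc0' : 0 ≤ M * v c / ω := div_nonneg (mul_nonneg hM0 hvc0.le) hω.le
    have hc0'' : 0 ≤ v c * m⁻¹ / ω :=
      div_nonneg (mul_nonneg hvc0.le (inv_nonneg.2 hmpos.le)) hω.le
    have hFnormG : ∀ p ∈ Set.Icc c p₂, ‖F p * G p‖ ≤ M * v c * m⁻¹ / ω := by
      intro p hp'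
      have hvp := hvpos p (hc.1.trans_le hp'.1)
      have h1 : ‖F p * G p‖ = v p * |w p| * ‖ut p‖ / ω := by
        simp only [hFdef, norm_mul, norm_div, Complex.norm_real, Real.norm_eq_abs, hGnorm,
          hiω, mul_one, abs_mul]
        rw [abs_of_pos hvp]
      rw [h1]
      have e1 : v p * |w p| ≤ v c * m⁻¹ :=
        mul_le_mul (hvle p hp') (hwbound p (hJ hp')) (abs_nonneg _) hvc0.le
      have e2 : v p * |w p| * ‖ut p‖ ≤ v c * m⁻¹ * M :=
        mul_le_mul e1 (hMle p (hJ hp')) (norm_nonneg _)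
          (mul_nonneg hvc0.le (inv_nonneg.2 hmpos.le))
      calc v p * |w p| * ‖ut p‖ / ω ≤ v c * m⁻¹ * M / ω := by
            exact (div_le_div_iff_of_pos_right hω).2 e2
        _ = M * v c * m⁻¹ / ω := by ring
    have hg1int : IntervalIntegrable
        (fun p => M * m⁻¹ / ω * ((1 - μ) * (p - p₁) ^ (μ - 2))) volume c p₂ := by
      apply IntervalIntegrable.const_mul
      apply ContinuousOn.intervalIntegrable
      rw [huIcc]
      exact continuousOn_const.mul hv2cont
    have hT1norm : ∀ᵐ t ∂(volume.restrict (Set.uIoc c p₂)),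
        ‖T₁ t‖ ≤ M * m⁻¹ / ω * ((1 - μ) * (t - p₁) ^ (μ - 2)) := by
      rw [huIoc, ae_restrict_iff' measurableSet_Ioc]
      apply Filter.Eventually.of_forall
      intro p hp'
      have hpi : p ∈ Set.Icc c p₂ := Set.Ioc_subset_Icc_self hp'
      have hpp₁ : p₁ < p := hc.1.trans hp'.1
      have hv2pos : (0:ℝ) ≤ (p - p₁) ^ (μ - 2) := Real.rpow_nonneg (by linarith) _
      have h1 : ‖T₁ p‖ = (1 - μ) * ((p - p₁) ^ (μ - 2)) * |w p| * ‖ut p‖ / ω := by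
        simp only [hT1def, norm_mul, norm_div, Complex.norm_real, Real.norm_eq_abs, hGnorm,
          hiω, mul_one, abs_mul]
        rw [abs_of_nonneg hv2pos, abs_of_nonpos (by linarith : μ - 1 ≤ 0)]
        ring
      rw [h1]
      have ha0 : (0:ℝ) ≤ (1 - μ) * ((p - p₁) ^ (μ - 2)) :=
        mul_nonneg (by linarith) hv2pos
      have e1 : (1 - μ) * ((p - p₁) ^ (μ - 2)) * |w p| ≤
          (1 - μ) * ((p - p₁) ^ (μ - 2)) * m⁻¹ :=
        mul_le_mul_of_nonneg_left (hwbound p (hJ hpi)) ha0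
      have e2 : (1 - μ) * ((p - p₁) ^ (μ - 2)) * |w p| * ‖ut p‖ ≤
          (1 - μ) * ((p - p₁) ^ (μ - 2)) * m⁻¹ * M :=
        mul_le_mul e1 (hMle p (hJ hpi)) (norm_nonneg _)
          (mul_nonneg ha0 (inv_nonneg.2 hmpos.le))
      calc (1 - μ) * ((p - p₁) ^ (μ - 2)) * |w p| * ‖ut p‖ / ω
          ≤ (1 - μ) * ((p - p₁) ^ (μ - 2)) * m⁻¹ * M / ω := by
            exact (div_le_div_iff_of_pos_right hω).2 e2
        _ = M * m⁻¹ / ω * ((1 - μ) * (p - p₁) ^ (μ - 2)) := by ring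
    have hintv2 : (∫ p in c..p₂, (1 - μ) * (p - p₁) ^ (μ - 2)) = v c - v p₂ := by
      have hai : ∀ x ∈ Set.uIcc c p₂,
          HasDerivAt (fun q => -v q) ((1 - μ) * (x - p₁) ^ (μ - 2)) x := by
        intro x hx
        rw [huIcc] at hx
        have h2 : -((μ - 1) * (x - p₁) ^ (μ - 2)) = (1 - μ) * (x - p₁) ^ (μ - 2) := by ring
        rw [← h2]
        exact (hvd' x (hc.1.trans_le hx.1)).neg
      rw [intervalIntegral.integral_eq_sub_of_hasDerivAt hai (by
        apply ContinuousOn.intervalIntegrable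
        rw [huIcc]
        exact continuousOn_const.mul hv2cont)]
      ring
    have hT1bound : ‖∫ p in c..p₂, T₁ p‖ ≤ M * v c * m⁻¹ / ω := by
      have h2 := intervalIntegral.norm_integral_le_abs_of_norm_le hT1norm hg1int
      rw [intervalIntegral.integral_const_mul, hintv2] at h2
      refine h2.trans ?_
      have hvp2 : 0 ≤ v p₂ := (hvpos p₂ hp).le
      have h0 : 0 ≤ v c - v p₂ := by linarith [hvle p₂ ⟨hcp, le_rfl⟩]
      rw [abs_of_nonneg (mul_nonneg hc0 h0)]
      calc M * m⁻¹ / ω * (v c - v p₂) ≤ M * m⁻¹ / ω * v c :=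
            mul_le_mul_of_nonneg_left (by linarith) hc0
        _ = M * v c * m⁻¹ / ω := by ring
    have hg2int : IntervalIntegrable (fun p => M * v c / ω * |deriv w p|) volume c p₂ :=
      (hwint.abs).const_mul _
    have hT2norm : ∀ᵐ t ∂(volume.restrict (Set.uIoc c p₂)),
        ‖T₂ t‖ ≤ M * v c / ω * |deriv w t| := by
      rw [huIoc, ae_restrict_iff' measurableSet_Ioc]
      apply Filter.Eventually.of_forall
      intro p hp'
      have hpi : p ∈ Set.Icc c p₂ := Set.Ioc_subset_Icc_self hp'
      have hvp := hvpos p (hc.1.trans hp'.1)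
      have h1 : ‖T₂ p‖ = |deriv w p| * (v p * ‖ut p‖ / ω) := by
        simp only [hT2def, norm_mul, norm_div, Complex.norm_real, Real.norm_eq_abs, hGnorm,
          hiω, mul_one]
        rw [abs_of_pos hvp]
      rw [h1]
      have e1 : v p * ‖ut p‖ ≤ v c * M :=
        mul_le_mul (hvle p hpi) (hMle p (hJ hpi)) (norm_nonneg _) hvc0.le
      calc |deriv w p| * (v p * ‖ut p‖ / ω) ≤ |deriv w p| * (v c * M / ω) :=
            mul_le_mul_of_nonneg_left
              ((div_le_div_iff_of_pos_right hω).2 e1) (abs_nonneg _)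
        _ = M * v c / ω * |deriv w p| := by ring
    have hT2bound : ‖∫ p in c..p₂, T₂ p‖ ≤ M * v c * m⁻¹ / ω := by
      have h2 := intervalIntegral.norm_integral_le_abs_of_norm_le hT2norm hg2int
      rw [intervalIntegral.integral_const_mul] at h2
      refine h2.trans ?_
      have h4 : 0 ≤ ∫ p in c..p₂, |deriv w p| :=
        intervalIntegral.integral_nonneg hcp (fun x _ => abs_nonneg _)
      rw [abs_of_nonneg (mul_nonneg hc0' h4)]
      calc M * v c / ω * ∫ p in c..p₂, |deriv w p| ≤ M * v c / ω * m⁻¹ :=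
            mul_le_mul_of_nonneg_left hintabsw hc0'
        _ = M * v c * m⁻¹ / ω := by ring
    have hg3int : IntervalIntegrable (fun p => v c * m⁻¹ / ω * ‖deriv ut p‖) volume c p₂ :=
      ((hutint.norm).mono_set hsubI).const_mul _
    have hT3norm : ∀ᵐ t ∂(volume.restrict (Set.uIoc c p₂)),
        ‖T₃ t‖ ≤ v c * m⁻¹ / ω * ‖deriv ut t‖ := by
      rw [huIoc, ae_restrict_iff' measurableSet_Ioc]
      apply Filter.Eventually.of_forall
      intro p hp'
      have hpi : p ∈ Set.Icc c p₂ := Set.Ioc_subset_Icc_self hp'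
      have hvp := hvpos p (hc.1.trans hp'.1)
      have h1 : ‖T₃ p‖ = ‖deriv ut p‖ * (v p * |w p| / ω) := by
        simp only [hT3def, norm_mul, norm_div, Complex.norm_real, Real.norm_eq_abs, hGnorm,
          hiω, mul_one, abs_mul]
        rw [abs_of_pos hvp]
      rw [h1]
      have e1 : v p * |w p| ≤ v c * m⁻¹ :=
        mul_le_mul (hvle p hpi) (hwbound p (hJ hpi)) (abs_nonneg _) hvc0.le
      calc ‖deriv ut p‖ * (v p * |w p| / ω) ≤ ‖deriv ut p‖ * (v c * m⁻¹ / ω) :=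
            mul_le_mul_of_nonneg_left
              ((div_le_div_iff_of_pos_right hω).2 e1) (norm_nonneg _)
        _ = v c * m⁻¹ / ω * ‖deriv ut p‖ := by ring
    have hcL : (∫ p in c..p₂, ‖deriv ut p‖) ≤ L := by
      have hsub1 : Set.uIcc p₁ c ⊆ Set.uIcc p₁ p₂ := by
        rw [Set.uIcc_of_le hc.1.le, Set.uIcc_of_le hp.le]
        exact Set.Icc_subset_Icc le_rfl hcp
      have hadd := intervalIntegral.integral_add_adjacent_intervals
        ((hutint.norm).mono_set hsub1) ((hutint.norm).mono_set hsubI)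
      have h1 : 0 ≤ ∫ p in p₁..c, ‖deriv ut p‖ :=
        intervalIntegral.integral_nonneg hc.1.le (fun x _ => norm_nonneg _)
      rw [hLdef]
      linarith
    have hT3bound : ‖∫ p in c..p₂, T₃ p‖ ≤ L * v c * m⁻¹ / ω := by
      have h2 := intervalIntegral.norm_integral_le_abs_of_norm_le hT3norm hg3int
      rw [intervalIntegral.integral_const_mul] at h2
      refine h2.trans ?_
      have h4 : 0 ≤ ∫ p in c..p₂, ‖deriv ut p‖ :=
        intervalIntegral.integral_nonneg hcp (fun x _ => norm_nonneg _)
      rw [abs_of_nonneg (mul_nonneg hc0'' h4)]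
      calc v c * m⁻¹ / ω * ∫ p in c..p₂, ‖deriv ut p‖ ≤ v c * m⁻¹ / ω * L :=
            mul_le_mul_of_nonneg_left hcL hc0''
        _ = L * v c * m⁻¹ / ω := by ring
    -- assemble
    have hsum : (∫ p in c..p₂, F' p * G p)
        = (∫ p in c..p₂, T₁ p) + (∫ p in c..p₂, T₂ p) + ∫ p in c..p₂, T₃ p := by
      rw [hsplitfun, intervalIntegral.integral_add (hT1int.add hT2int) hT3int,
        intervalIntegral.integral_add hT1int hT2int]
    have hnsum : ‖∫ p in c..p₂, F' p * G p‖ ≤ 2 * (M * v c * m⁻¹ / ω) + L * v c * m⁻¹ / ω := by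
      rw [hsum]
      calc ‖(∫ p in c..p₂, T₁ p) + (∫ p in c..p₂, T₂ p) + ∫ p in c..p₂, T₃ p‖
          ≤ ‖(∫ p in c..p₂, T₁ p) + (∫ p in c..p₂, T₂ p)‖ + ‖∫ p in c..p₂, T₃ p‖ :=
            norm_add_le _ _
        _ ≤ ‖∫ p in c..p₂, T₁ p‖ + ‖∫ p in c..p₂, T₂ p‖ + ‖∫ p in c..p₂, T₃ p‖ := by
            have := norm_add_le (∫ p in c..p₂, T₁ p) (∫ p in c..p₂, T₂ p)
            linarith
        _ ≤ 2 * (M * v c * m⁻¹ / ω) + L * v c * m⁻¹ / ω := by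
            linarith [hT1bound, hT2bound, hT3bound]
    calc ‖∫ p in c..p₂, f p‖
        = ‖(F p₂ * G p₂ - F c * G c) - ∫ p in c..p₂, F' p * G p‖ := by rw [hsplit2]
      _ ≤ ‖F p₂ * G p₂ - F c * G c‖ + ‖∫ p in c..p₂, F' p * G p‖ := norm_sub_le _ _
      _ ≤ (‖F p₂ * G p₂‖ + ‖F c * G c‖) + ‖∫ p in c..p₂, F' p * G p‖ := by
          have := norm_sub_le (F p₂ * G p₂) (F c * G c)
          linarith
      _ ≤ (M * v c * m⁻¹ / ω + M * v c * m⁻¹ / ω) +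
            (2 * (M * v c * m⁻¹ / ω) + L * v c * m⁻¹ / ω) := by
          have b1 := hFnormG p₂ ⟨hcp, le_rfl⟩
          have b2 := hFnormG c ⟨le_rfl, hcp⟩
          linarith
      _ = (4 * M + L) * v c * m⁻¹ / ω := by ring
  -- final assembly
  rw [hmain]
  have hrpow_pos : (0:ℝ) ≤ ω ^ (-μ) := (Real.rpow_pos_of_pos hω _).le
  have hterm2 : 0 ≤ (4 * M + L) * m⁻¹ * ω ^ (-μ) :=
    mul_nonneg (mul_nonneg (by linarith) (inv_nonneg.2 hmpos.le)) hrpow_pos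
  have hωinv : (ω⁻¹) ^ μ = ω ^ (-μ) := by
    rw [Real.inv_rpow hω.le, ← Real.rpow_neg hω.le]
  rcases le_or_gt (p₂ - p₁) ω⁻¹ with hcase | hcase
  · have h1 := hbound1 p₂ ⟨hp, le_rfl⟩
    have h2 : (p₂ - p₁) ^ μ ≤ ω⁻¹ ^ μ := Real.rpow_le_rpow (by linarith) hcase hμ0.le
    calc ‖∫ p in p₁..p₂, f p‖ ≤ M * ((p₂ - p₁) ^ μ / μ) := h1
      _ ≤ M * (ω ^ (-μ) / μ) := by
          apply mul_le_mul_of_nonneg_left _ hM0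
          rw [← hωinv]
          exact (div_le_div_iff_of_pos_right hμ0).2 h2
      _ = 1 / μ * M * ω ^ (-μ) := by ring
      _ ≤ (1 / μ * M + (4 * M + L) * m⁻¹) * ω ^ (-μ) := by
          rw [add_mul]
          linarith [hterm2]
  · have hc : p₁ + ω⁻¹ ∈ Set.Ioo p₁ p₂ := ⟨by linarith [inv_pos.2 hω], by linarith⟩
    set c := p₁ + ω⁻¹ with hcdef
    obtain ⟨hint2, hb2⟩ := key2 c hc
    have hsplitint : (∫ p in p₁..p₂, f p) = (∫ p in p₁..c, f p) + ∫ p in c..p₂, f p :=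
      (intervalIntegral.integral_add_adjacent_intervals (hfint1 c ⟨hc.1, hc.2.le⟩) hint2).symm
    have hb1 := hbound1 c ⟨hc.1, hc.2.le⟩
    have hcp₁ : c - p₁ = ω⁻¹ := by rw [hcdef]; ring
    have hdivω : ω ^ (1 - μ) / ω = ω ^ (-μ) := by
      rw [div_eq_mul_inv, ← Real.rpow_neg_one ω, ← Real.rpow_add hω]
      congr 1
      ring
    have hvceq : v c = ω ^ (1 - μ) := by
      simp only [hvdef]
      rw [hcp₁, Real.inv_rpow hω.le, ← Real.rpow_neg hω.le]
      congr 1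
      ring
    have hvcω : v c * m⁻¹ / ω = m⁻¹ * ω ^ (-μ) := by
      calc v c * m⁻¹ / ω = ω ^ (1 - μ) / ω * m⁻¹ := by rw [hvceq]; ring
        _ = ω ^ (-μ) * m⁻¹ := by rw [hdivω]
        _ = m⁻¹ * ω ^ (-μ) := by ring
    calc ‖∫ p in p₁..p₂, f p‖ = ‖(∫ p in p₁..c, f p) + ∫ p in c..p₂, f p‖ := by
          rw [hsplitint]
      _ ≤ ‖∫ p in p₁..c, f p‖ + ‖∫ p in c..p₂, f p‖ := norm_add_le _ _
      _ ≤ M * ((c - p₁) ^ μ / μ) + (4 * M + L) * v c * m⁻¹ / ω := add_le_add hb1 hb2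
      _ = 1 / μ * M * ω ^ (-μ) + (4 * M + L) * (v c * m⁻¹ / ω) := by
          rw [hcp₁, hωinv]
          ring
      _ = (1 / μ * M + (4 * M + L) * m⁻¹) * ω ^ (-μ) := by
          rw [hvcω]
          ring
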